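/- Let K' ⊆ 𝔽_2^{ν} ⊕ 𝔽_2·H be a bicoloured binary code with ν ≤ 14, let K = K' ∩ 𝔽_2^{ν}, and let K'' be the projection of K' to 𝔽_2^{ν}. Assume every nonzero codeword of K has weight divisible by 8, every codeword in K'' \ K has weight in {2, 6, 10, 14}, some codeword u ∈ K'' \ K has weight exactly 14, dim K' ≤ dim K + 1, and dim K' ≥ ν − 10. Then ν = 14, dim K = 3, and, up to a permutation of coordinates, u = Σ_{i=1}^{14} e_i and K is spanned by Σ_{i=1}^{8} e_i, Σ_{i=5}^{12} e_i, and Σ_{j=0}^{3} (e_{1+4j} + e_{2+4j}). -/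

import Mathlib

open Finset

namespace Stmt18Aux

lemma zmod2_eq_one {a : ZMod 2} (h : a ≠ 0) : a = 1 := by revert h; revert a; decide

lemma zmod2_eq_zero {a : ZMod 2} (h : a ≠ 1) : a = 0 := by revert h; revert a; decide

lemma hammingNorm_eq (x : Fin 14 → ZMod 2) :
    hammingNorm x = (univ.filter fun i => x i ≠ 0).card := by
  rw [hammingNorm]

def g : Fin 3 → (Fin 14 → ZMod 2)
  | 0 => fun i => if (i : ℕ) < 8 then 1 else 0
  | 1 => fun i => if 4 ≤ (i : ℕ) ∧ (i : ℕ) < 12 then 1 else 0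
  | 2 => fun i => if (i : ℕ) % 4 < 2 then 1 else 0

def stdcol (i : Fin 14) : Fin 3 → ZMod 2 := fun j => g j i

lemma stdcol_card (v : Fin 3 → ZMod 2) :
    (univ.filter (fun i : Fin 14 => stdcol i = v)).card = if v = 0 then 0 else 2 := by
  revert v; decide

lemma fano3 (v : Fin 3 → ZMod 2) (hv : v ≠ 0) :
    (univ.filter (fun x : Fin 3 → ZMod 2 => x ≠ 0 ∧ dotProduct x v = 0)).card = 3 := by
  revert hv; revert v; decide

lemma fano1 (v w : Fin 3 → ZMod 2) (hv : v ≠ 0) (hw : w ≠ 0) :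
    (univ.filter (fun x : Fin 3 → ZMod 2 =>
      (x ≠ 0 ∧ dotProduct x v = 0) ∧ dotProduct x w = 0)).card =
      if w = v then 3 else 1 := by
  revert hv hw; revert v w; decide

lemma g0 : g 0 = fun i : Fin 14 => if (i : ℕ) < 8 then (1 : ZMod 2) else 0 := rfl
lemma g1 : g 1 = fun i : Fin 14 => if 4 ≤ (i : ℕ) ∧ (i : ℕ) < 12 then (1 : ZMod 2) else 0 := rfl
lemma g2 : g 2 = fun i : Fin 14 => if (i : ℕ) % 4 < 2 then (1 : ZMod 2) else 0 := rfl

lemma range_fin3 {α : Type*} (f : Fin 3 → α) : Set.range f = {f 0, f 1, f 2} := by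
  ext y
  constructor
  · rintro ⟨j, rfl⟩; fin_cases j <;> simp
  · rintro (rfl | rfl | rfl) <;> exact ⟨_, rfl⟩

lemma exists_comp_eq {α β : Type*} [Fintype α] [DecidableEq α] [DecidableEq β] (f q : α → β)
    (h : ∀ b, (univ.filter fun a => f a = b).card = (univ.filter fun a => q a = b).card) :
    ∃ σ : Equiv.Perm α, f ∘ σ = q := by
  have e : ∀ b : β, { a // q a = b } ≃ { a // f a = b } := fun b =>
    Fintype.equivOfCardEq (by
      rw [Fintype.card_subtype, Fintype.card_subtype, h b])
  refine ⟨((Equiv.sigmaFiberEquiv q).symm.trans ((Equiv.sigmaCongrRight e).trans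
    (Equiv.sigmaFiberEquiv f))), funext fun a => ?_⟩
  exact ((e (q a)) ⟨a, rfl⟩).2

lemma half_card {G : Type*} [AddCommGroup G] [Module (ZMod 2) G] [Fintype G] [DecidableEq G]
    (φ : G →+ ZMod 2) (c0 : G) (h : φ c0 = 1) :
    2 * (univ.filter fun c => φ c = 1).card = Fintype.card G := by
  have hinv : ∀ c : G, c + c0 + c0 = c := by
    intro c
    have : c0 + c0 = 0 := by
      have h2 : ((2 : ℕ) : ZMod 2) • c0 = (2 : ℕ) • c0 := Nat.cast_smul_eq_nsmul (ZMod 2) 2 c0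
      have h0 : ((2 : ℕ) : ZMod 2) = 0 := by decide
      rw [h0, zero_smul] at h2
      simpa [two_smul] using h2.symm
    rw [add_assoc, this, add_zero]
  have key : (univ.filter fun c : G => φ c = 1).card
      = (univ.filter fun c : G => ¬ (φ c = 1)).card := by
    apply Finset.card_bij' (fun c _ => c + c0) (fun c _ => c + c0)
    · intro a ha
      simp only [mem_filter, mem_univ, true_and] at ha ⊢
      rw [map_add, ha, h]; decide
    · intro a ha
      simp only [mem_filter, mem_univ, true_and] at ha ⊢
      have : φ a = 0 := zmod2_eq_zero ha
      rw [map_add, this, h, zero_add]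
    · intro a _; exact hinv a
    · intro a _; exact hinv a
  have := Finset.card_filter_add_card_filter_not (s := (univ : Finset G))
    (p := fun c => φ c = 1)
  simp only [Finset.card_univ] at this
  omega

end Stmt18Aux

open Stmt18Aux in
/-- Classification of bicoloured codes of nodal K3 type admitting a half-even set of
cardinality `t = 14`.  `K' ⊆ 𝔽_2^ν ⊕ 𝔽_2·H` is modelled as a submodule of
`(Fin ν → ZMod 2) × ZMod 2`; `K` is the subcode with `H`-coordinate `0` and `K''` is
the projection to `𝔽_2^ν`.  If `ν ≤ 14`, all nonzero weights of `K` are divisible by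
`8`, all weights of `K'' \ K` lie in `{2, 6, 10, 14}`, some `u ∈ K'' \ K` has weight
`14`, `dim K' ≤ dim K + 1` and the B-inequality `dim K' ≥ ν − 10` holds, then `ν = 14`,
`dim K = 3`, and up to a permutation of the coordinates `u = Σ_{i=1}^{14} e_i` and `K`
is spanned by `Σ_{i=1}^{8} e_i`, `Σ_{i=5}^{12} e_i`, `Σ_{j=0}^{3}(e_{1+4j}+e_{2+4j})`. -/
theorem stmt18 (ν : ℕ) (hν : ν ≤ 14)
    (K' : Submodule (ZMod 2) ((Fin ν → ZMod 2) × ZMod 2))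
    (K K'' : Submodule (ZMod 2) (Fin ν → ZMod 2))
    (hK : K = K'.comap (LinearMap.inl (ZMod 2) (Fin ν → ZMod 2) (ZMod 2)))
    (hK'' : K'' = K'.map (LinearMap.fst (ZMod 2) (Fin ν → ZMod 2) (ZMod 2)))
    (hwK : ∀ c ∈ K, c ≠ 0 → 8 ∣ hammingNorm c)
    (hwK'' : ∀ c ∈ K'', c ∉ K →
      hammingNorm c = 2 ∨ hammingNorm c = 6 ∨ hammingNorm c = 10 ∨ hammingNorm c = 14)
    (u : Fin ν → ZMod 2) (hu : u ∈ K'') (huK : u ∉ K) (hu14 : hammingNorm u = 14)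
    (hdim : Module.finrank (ZMod 2) K' ≤ Module.finrank (ZMod 2) K + 1)
    (hB : ν ≤ Module.finrank (ZMod 2) K' + 10) :
    ν = 14 ∧ Module.finrank (ZMod 2) K = 3 ∧
      ∃ σ : Equiv.Perm (Fin ν),
        (u ∘ ⇑σ = fun _ => 1) ∧
        K = Submodule.span (ZMod 2)
          {(fun i : Fin ν => if (i : ℕ) < 8 then (1 : ZMod 2) else 0) ∘ ⇑σ,
           (fun i : Fin ν => if 4 ≤ (i : ℕ) ∧ (i : ℕ) < 12 then (1 : ZMod 2) else 0) ∘ ⇑σ,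
           (fun i : Fin ν => if (i : ℕ) % 4 < 2 then (1 : ZMod 2) else 0) ∘ ⇑σ} := by
  classical
  haveI : Fact (Nat.Prime 2) := ⟨Nat.prime_two⟩
  have hν14 : ν = 14 := by
    have h1 : hammingNorm u ≤ Fintype.card (Fin ν) := hammingNorm_le_card_fintype
    simp only [Fintype.card_fin] at h1
    omega
  subst hν14
  -- u is the all-ones vector
  have hu1 : ∀ i, u i = 1 := by
    intro i
    by_contra hi
    have h0 : u i = 0 := zmod2_eq_zero hi
    have hsub : (univ.filter fun j : Fin 14 => u j ≠ 0) ⊆ univ.erase i := by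
      intro j hj
      rcases mem_filter.mp hj with ⟨-, hj2⟩
      refine mem_erase.mpr ⟨?_, mem_univ j⟩
      rintro rfl; exact hj2 h0
    have hcle := card_le_card hsub
    rw [card_erase_of_mem (mem_univ i)] at hcle
    rw [hammingNorm_eq] at hu14
    simp only [card_univ, Fintype.card_fin] at hcle
    omega
  have hk3 : 3 ≤ Module.finrank (ZMod 2) K := by omega
  -- all nonzero weights are 8
  have hw8 : ∀ c ∈ K, c ≠ 0 → hammingNorm c = 8 := by
    intro c hc hc0
    rcases hwK c hc hc0 with ⟨m, hm⟩
    have hle : hammingNorm c ≤ 14 := by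
      have := hammingNorm_le_card_fintype (x := c)
      simpa using this
    have hne : hammingNorm c ≠ 0 := hammingNorm_ne_zero_iff.mpr hc0
    rcases m with _ | _ | m <;> omega
  letI : Fintype ↥K := Fintype.ofFinite ↥K
  set k := Module.finrank (ZMod 2) ↥K with hkdef
  have hcard : Fintype.card ↥K = 2 ^ k := by
    rw [Module.card_eq_pow_finrank (K := ZMod 2) (V := ↥K), ZMod.card]
  set n : Fin 14 → ℕ :=
    fun i => (univ.filter fun c : ↥K => (c : Fin 14 → ZMod 2) i = 1).card with hndef
  have hhalf : ∀ i, n i = 0 ∨ 2 * n i = 2 ^ k := by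
    intro i
    by_cases hex : ∃ c : ↥K, (c : Fin 14 → ZMod 2) i = 1
    · right
      obtain ⟨c0, hc0⟩ := hex
      have hh := half_card ((Pi.evalAddMonoidHom (fun _ : Fin 14 => ZMod 2) i).comp
        (K.subtype.toAddMonoidHom)) c0 hc0
      rw [hcard] at hh
      exact hh
    · left
      push_neg at hex
      rw [hndef]
      simp only [Finset.card_eq_zero, Finset.filter_eq_empty_iff]
      intro c _
      exact fun h => (hex c) h
  -- total weight
  have hsumwt : ∑ c : ↥K, hammingNorm (c : Fin 14 → ZMod 2) = 8 * (2 ^ k - 1) := by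
    have h0 : hammingNorm ((0 : ↥K) : Fin 14 → ZMod 2) = 0 := by
      simp [hammingNorm_eq_zero]
    rw [← Finset.add_sum_erase _ _ (mem_univ (0 : ↥K)), h0, zero_add]
    have hcong : ∀ c ∈ univ.erase (0 : ↥K), hammingNorm (c : Fin 14 → ZMod 2) = 8 := by
      intro c hc
      have hc0 : c ≠ 0 := (mem_erase.mp hc).1
      exact hw8 (c : Fin 14 → ZMod 2) c.2 (fun h => hc0 (Subtype.ext h))
    rw [Finset.sum_congr rfl hcong, Finset.sum_const, smul_eq_mul,
      card_erase_of_mem (mem_univ _), card_univ, hcard, Nat.mul_comm]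
  have hswap : ∑ c : ↥K, hammingNorm (c : Fin 14 → ZMod 2) = ∑ i, n i := by
    have h1 : ∀ c : ↥K, hammingNorm (c : Fin 14 → ZMod 2)
        = ∑ i, if (c : Fin 14 → ZMod 2) i = 1 then 1 else 0 := by
      intro c
      rw [hammingNorm_eq, Finset.card_filter]
      refine Finset.sum_congr rfl fun i _ => ?_
      by_cases h : (c : Fin 14 → ZMod 2) i = 1
      · rw [if_pos h, if_pos (by rw [h]; exact one_ne_zero)]
      · rw [if_neg h, if_neg (by simp [zmod2_eq_zero h])]
    rw [Finset.sum_congr rfl fun c _ => h1 c, Finset.sum_comm]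
    exact Finset.sum_congr rfl fun i _ => (Finset.card_filter _ _).symm
  have hsum56 : ∑ i, n i = 8 * (2 ^ k - 1) := by rw [← hswap, hsumwt]
  have hp8 : 8 ≤ 2 ^ k := by
    calc (8 : ℕ) = 2 ^ 3 := rfl
    _ ≤ 2 ^ k := Nat.pow_le_pow_right (by norm_num) hk3
  have h2 : 2 * ∑ i, n i ≤ ∑ _i : Fin 14, 2 ^ k := by
    rw [Finset.mul_sum]
    exact Finset.sum_le_sum fun i _ => by rcases hhalf i with h | h <;> omega
  have hk8 : 2 ^ k = 8 := by
    simp only [Finset.sum_const, card_univ, Fintype.card_fin, smul_eq_mul, hsum56] at h2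
    obtain ⟨P, hP⟩ : ∃ P, (2 : ℕ) ^ k = P := ⟨_, rfl⟩
    rw [hP] at h2 hp8 ⊢
    omega
  have hkeq3 : k = 3 := Nat.pow_right_injective (le_refl 2) (show (2:ℕ)^k = 2^3 from hk8)
  have hnle : ∀ i, n i ≤ 4 := by
    intro i; rcases hhalf i with h | h <;> omega
  have hn4 : ∀ i, n i = 4 := by
    intro i
    by_contra hne
    have hlt : n i < 4 := lt_of_le_of_ne (hnle i) hne
    have hslt : ∑ j, n j < ∑ _j : Fin 14, 4 :=
      Finset.sum_lt_sum (fun j _ => hnle j) ⟨i, mem_univ i, hlt⟩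
    rw [hsum56, hk8] at hslt
    simp only [Finset.sum_const, card_univ, Fintype.card_fin, smul_eq_mul] at hslt
    omega
  -- basis of K
  have hfr3 : Module.finrank (ZMod 2) ↥K = 3 := hkeq3
  let b : Module.Basis (Fin 3) (ZMod 2) ↥K := Module.finBasisOfFinrankEq (ZMod 2) ↥K hfr3
  let col : Fin 14 → (Fin 3 → ZMod 2) := fun i j => ((b j : ↥K) : Fin 14 → ZMod 2) i
  have hexpand : ∀ (x : Fin 3 → ZMod 2) (i : Fin 14),
      ((∑ j, x j • b j : ↥K) : Fin 14 → ZMod 2) i = dotProduct x (col i) := by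
    intro x i
    have hc : ((∑ j, x j • b j : ↥K) : Fin 14 → ZMod 2)
        = ∑ j, x j • ((b j : ↥K) : Fin 14 → ZMod 2) := by
      simp
    rw [hc, Finset.sum_apply]
    simp [col, dotProduct]
  have hcolne : ∀ i, col i ≠ 0 := by
    intro i hcol
    have h4 := hn4 i
    have hpos : 0 < (univ.filter fun c : ↥K => (c : Fin 14 → ZMod 2) i = 1).card := by
      have h4' := hn4 i
      simp only [hndef] at h4'
      omega
    obtain ⟨c, hc⟩ := Finset.card_pos.mp hpos
    rcases mem_filter.mp hc with ⟨-, hci⟩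
    have hrepr := b.sum_repr c
    have he := hexpand (fun j => b.repr c j) i
    rw [hrepr] at he
    rw [hci, hcol, dotProduct_zero] at he
    exact one_ne_zero he
  have hw6 : ∀ x : Fin 3 → ZMod 2, x ≠ 0 →
      (univ.filter fun i : Fin 14 => dotProduct x (col i) = 0).card = 6 := by
    intro x hx
    have hlin : (∑ j, x j • b j : ↥K) ≠ 0 := by
      intro h0
      exact hx (funext fun j =>
        (Fintype.linearIndependent_iff.mp b.linearIndependent) x h0 j)
    have hwt : hammingNorm ((∑ j, x j • b j : ↥K) : Fin 14 → ZMod 2) = 8 :=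
      hw8 _ (∑ j, x j • b j : ↥K).2 (fun h => hlin (Subtype.ext h))
    rw [hammingNorm_eq] at hwt
    have heq : (univ.filter fun i : Fin 14 =>
          ((∑ j, x j • b j : ↥K) : Fin 14 → ZMod 2) i ≠ 0)
        = univ.filter fun i : Fin 14 => dotProduct x (col i) ≠ 0 := by
      apply Finset.filter_congr
      intro i _
      rw [hexpand x i]
    rw [heq] at hwt
    have htot := Finset.card_filter_add_card_filter_not
      (s := (univ : Finset (Fin 14))) (p := fun i => dotProduct x (col i) = 0)
    simp only [card_univ, Fintype.card_fin] at htot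
    have : (univ.filter fun i : Fin 14 => ¬ dotProduct x (col i) = 0).card = 8 := by
      rw [← hwt]
    omega
  -- each nonzero column occurs exactly twice
  have hm2 : ∀ v : Fin 3 → ZMod 2, v ≠ 0 →
      (univ.filter fun i : Fin 14 => col i = v).card = 2 := by
    intro v hv
    have hT : ∑ x ∈ univ.filter (fun x : Fin 3 → ZMod 2 => x ≠ 0 ∧ dotProduct x v = 0),
        (univ.filter fun i : Fin 14 => dotProduct x (col i) = 0).card = 18 := by
      rw [Finset.sum_congr rfl (fun x hx => hw6 x (mem_filter.mp hx).2.1),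
        Finset.sum_const, fano3 v hv]
      rfl
    have hT2 : ∑ x ∈ univ.filter (fun x : Fin 3 → ZMod 2 => x ≠ 0 ∧ dotProduct x v = 0),
        (univ.filter fun i : Fin 14 => dotProduct x (col i) = 0).card
        = ∑ i : Fin 14, (if col i = v then 3 else 1) := by
      have e1 : ∀ x ∈ univ.filter (fun x : Fin 3 → ZMod 2 => x ≠ 0 ∧ dotProduct x v = 0),
          (univ.filter fun i : Fin 14 => dotProduct x (col i) = 0).card
          = ∑ i : Fin 14, if dotProduct x (col i) = 0 then 1 else 0 :=
        fun x _ => Finset.card_filter _ _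
      rw [Finset.sum_congr rfl e1, Finset.sum_comm]
      refine Finset.sum_congr rfl fun i _ => ?_
      rw [← Finset.card_filter, Finset.filter_filter]
      rw [fano1 v (col i) hv (hcolne i)]
    rw [hT2] at hT
    have hsplit : ∑ i : Fin 14, (if col i = v then 3 else 1)
        = (univ.filter fun i : Fin 14 => col i = v).card * 3
          + (univ.filter fun i : Fin 14 => ¬ col i = v).card * 1 := by
      rw [Finset.sum_ite, Finset.sum_const, Finset.sum_const, smul_eq_mul, smul_eq_mul]
    have htot := Finset.card_filter_add_card_filter_not
      (s := (univ : Finset (Fin 14))) (p := fun i => col i = v)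
    simp only [card_univ, Fintype.card_fin] at htot
    omega
  -- fiber cardinalities of stdcol and col agree
  have hfib : ∀ v : Fin 3 → ZMod 2,
      (univ.filter fun i : Fin 14 => stdcol i = v).card
      = (univ.filter fun i : Fin 14 => col i = v).card := by
    intro v
    rw [stdcol_card]
    by_cases hv : v = 0
    · subst hv
      rw [if_pos rfl]
      symm
      rw [Finset.card_eq_zero, Finset.filter_eq_empty_iff]
      exact fun i _ => hcolne i
    · rw [if_neg hv, hm2 v hv]
  obtain ⟨σ, hσ⟩ := exists_comp_eq stdcol col hfib
  have hbval : ∀ j : Fin 3, (g j ∘ ⇑σ) = ((b j : ↥K) : Fin 14 → ZMod 2) := by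
    intro j
    funext i
    exact congrFun (congrFun hσ i ▸ rfl : stdcol (σ i) = col i) j
  have hKspan : K = Submodule.span (ZMod 2)
      (Set.range fun j : Fin 3 => ((b j : ↥K) : Fin 14 → ZMod 2)) := by
    have h1 := b.span_eq
    have h2 := congrArg (Submodule.map K.subtype) h1
    rw [Submodule.map_span, Submodule.map_top, Submodule.range_subtype,
      ← Set.range_comp] at h2
    exact h2.symm
  refine ⟨rfl, hfr3, σ, funext fun i => hu1 (σ i), ?_⟩
  rw [hKspan, range_fin3]
  have e0 : (fun i : Fin 14 => if (i : ℕ) < 8 then (1 : ZMod 2) else 0) ∘ ⇑σ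
      = ((b 0 : ↥K) : Fin 14 → ZMod 2) := hbval 0
  have e1 : (fun i : Fin 14 => if 4 ≤ (i : ℕ) ∧ (i : ℕ) < 12 then (1 : ZMod 2) else 0) ∘ ⇑σ
      = ((b 1 : ↥K) : Fin 14 → ZMod 2) := hbval 1
  have e2 : (fun i : Fin 14 => if (i : ℕ) % 4 < 2 then (1 : ZMod 2) else 0) ∘ ⇑σ
      = ((b 2 : ↥K) : Fin 14 → ZMod 2) := hbval 2
  rw [e0, e1, e2]
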